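/- arXiv:2403.01965 — 9 statements merged into one kernel-verified Lean document; each statement's English description precedes it below -/
import Mathlib

section
/- Let F be a field, and let f, g ∈ F[x₁,…,xₙ] be nonzero polynomials with g(0) = β ≠ 0 and deg g ≤ deg f. Then g divides f in F[x₁,…,xₙ] if and only if f − Q_{f,g}·g is the zero polynomial, where Q_{f,g} is the pseudo-quotient of f and g. -/
open MvPolynomial

/-- `Hom_{≤ k}(p)`: the sum of the homogeneous components of `p` of degree at most `k`. -/
noncomputable def homTruncLE {n : ℕ} {F : Type*} [CommSemiring F] (k : ℕ)
    (p : MvPolynomial (Fin n) F) : MvPolynomial (Fin n) F :=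
  ∑ i ∈ Finset.range (k + 1), MvPolynomial.homogeneousComponent i p

/-- The pseudo-quotient of `f` and `g` (Forbes), where `β = g(0)`,
`D = deg f`, `d = deg g` and `g̃ = 1 - g/β`:
`Q_{f,g} = Hom_{≤ D-d}((f/β) · (1 + g̃ + ⋯ + g̃^{D-d}))`. -/
noncomputable def pseudoQuotient {n : ℕ} {F : Type*} [Field F]
    (f g : MvPolynomial (Fin n) F) : MvPolynomial (Fin n) F :=
  let β : F := MvPolynomial.eval (0 : Fin n → F) g
  let D : ℕ := f.totalDegree
  let d : ℕ := g.totalDegree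
  let gt : MvPolynomial (Fin n) F := 1 - MvPolynomial.C β⁻¹ * g
  homTruncLE (D - d) ((MvPolynomial.C β⁻¹ * f) * ∑ i ∈ Finset.range (D - d + 1), gt ^ i)

lemma degAdd {n : ℕ} (a b : Fin n →₀ ℕ) : (a + b).degree = a.degree + b.degree := by
  rw [Finsupp.degree_eq_weight_one]
  exact map_add (Finsupp.weight 1) a b

lemma coeff_homTruncLE {n : ℕ} {F : Type*} [CommSemiring F] (k : ℕ)
    (p : MvPolynomial (Fin n) F) (d : Fin n →₀ ℕ) :
    MvPolynomial.coeff d (homTruncLE k p) =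
      if d.degree ≤ k then MvPolynomial.coeff d p else 0 := by
  rw [homTruncLE, MvPolynomial.coeff_sum]
  simp_rw [coeff_homogeneousComponent]
  rw [Finset.sum_ite_eq (Finset.range (k + 1)) d.degree (fun _ => MvPolynomial.coeff d p)]
  simp [Nat.lt_succ_iff]

lemma coeff_pow_eq_zero {n : ℕ} {F : Type*} [CommSemiring F] {p : MvPolynomial (Fin n) F}
    (hp : MvPolynomial.constantCoeff p = 0) :
    ∀ (k : ℕ) (d : Fin n →₀ ℕ), d.degree < k → MvPolynomial.coeff d (p ^ k) = 0 := by
  intro k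
  induction k with
  | zero => intro d hd; omega
  | succ k ih =>
    intro d hd
    rw [pow_succ', MvPolynomial.coeff_mul]
    apply Finset.sum_eq_zero
    rintro ⟨u, v⟩ huv
    rw [Finset.HasAntidiagonal.mem_antidiagonal] at huv
    by_cases hu : u = 0
    · subst hu
      have : MvPolynomial.coeff (0 : Fin n →₀ ℕ) p = 0 := hp
      simp [this]
    · have hu1 : 1 ≤ u.degree := by
        rcases Nat.eq_zero_or_pos u.degree with h | h
        · exact absurd ((Finsupp.degree_eq_zero_iff u).1 h) hu
        · exact h
      have hdeg : u.degree + v.degree = d.degree := by rw [← degAdd, huv]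
      have : v.degree < k := by omega
      rw [ih v this, mul_zero]

lemma homTruncLE_key {n : ℕ} {F : Type*} [CommRing F] (m : ℕ)
    (q gt : MvPolynomial (Fin n) F) (hgt : MvPolynomial.constantCoeff gt = 0)
    (hq : q.totalDegree ≤ m) :
    homTruncLE m (q * (1 - gt ^ (m + 1))) = q := by
  ext d
  rw [coeff_homTruncLE]
  split_ifs with h
  · rw [mul_sub, mul_one, MvPolynomial.coeff_sub]
    have : MvPolynomial.coeff d (q * gt ^ (m + 1)) = 0 := by
      rw [MvPolynomial.coeff_mul]
      apply Finset.sum_eq_zero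
      rintro ⟨u, v⟩ huv
      rw [Finset.HasAntidiagonal.mem_antidiagonal] at huv
      have hdeg : u.degree + v.degree = d.degree := by rw [← degAdd, huv]
      have : v.degree < m + 1 := by omega
      rw [coeff_pow_eq_zero hgt (m + 1) v this, mul_zero]
    rw [this, sub_zero]
  · symm
    apply MvPolynomial.coeff_eq_zero_of_totalDegree_lt
    have : m < d.degree := not_le.1 h
    calc q.totalDegree ≤ m := hq
      _ < d.degree := this

/-- The top homogeneous component of a nonzero polynomial is nonzero. -/
lemma homComp_top_ne_zero {n : ℕ} {F : Type*} [CommSemiring F]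
    {p : MvPolynomial (Fin n) F} (hp : p ≠ 0) :
    MvPolynomial.homogeneousComponent p.totalDegree p ≠ 0 := by
  have hsupp : p.support.Nonempty := MvPolynomial.support_nonempty.2 hp
  obtain ⟨d, hd, hdeg⟩ := Finset.exists_mem_eq_sup p.support hsupp
    (fun s => s.sum fun _ e => e)
  have hdd : d.degree = p.totalDegree := by
    rw [MvPolynomial.totalDegree, hdeg]
    rfl
  intro hzero
  have := congrArg (MvPolynomial.coeff d) hzero
  rw [coeff_homogeneousComponent, if_pos hdd, MvPolynomial.coeff_zero] at this
  exact (MvPolynomial.mem_support_iff.1 hd) this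

lemma totalDegree_mul_eq {n : ℕ} {F : Type*} [Field F]
    {p q : MvPolynomial (Fin n) F} (hp : p ≠ 0) (hq : q ≠ 0) :
    (p * q).totalDegree = p.totalDegree + q.totalDegree := by
  refine le_antisymm (MvPolynomial.totalDegree_mul p q) ?_
  set dp := p.totalDegree
  set dq := q.totalDegree
  set P := MvPolynomial.homogeneousComponent dp p with hP
  set Q := MvPolynomial.homogeneousComponent dq q with hQ
  have hPne : P ≠ 0 := homComp_top_ne_zero hp
  have hQne : Q ≠ 0 := homComp_top_ne_zero hq
  have hPQne : P * Q ≠ 0 := mul_ne_zero hPne hQne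
  have hPhom : P.IsHomogeneous dp := MvPolynomial.homogeneousComponent_isHomogeneous dp p
  have hQhom : Q.IsHomogeneous dq := MvPolynomial.homogeneousComponent_isHomogeneous dq q
  have hPQhom : (P * Q).IsHomogeneous (dp + dq) := hPhom.mul hQhom
  obtain ⟨m, hm⟩ := MvPolynomial.support_nonempty.2 hPQne
  have hmcoeff : MvPolynomial.coeff m (P * Q) ≠ 0 := MvPolynomial.mem_support_iff.1 hm
  have hmdeg : m.degree = dp + dq := by
    have := hPQhom hmcoeff
    rwa [Finsupp.degree_eq_weight_one]
  -- coeff m (p * q) = coeff m (P * Q)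
  have hcoeff : MvPolynomial.coeff m (p * q) = MvPolynomial.coeff m (P * Q) := by
    rw [MvPolynomial.coeff_mul, MvPolynomial.coeff_mul]
    apply Finset.sum_congr rfl
    rintro ⟨u, v⟩ huv
    rw [Finset.HasAntidiagonal.mem_antidiagonal] at huv
    have hdeg : u.degree + v.degree = dp + dq := by rw [← degAdd, huv, hmdeg]
    by_cases hu : u.degree = dp
    · have hv : v.degree = dq := by omega
      rw [hP, hQ, coeff_homogeneousComponent, coeff_homogeneousComponent,
        if_pos hu, if_pos hv]
    · rcases lt_or_gt_of_ne hu with hlt | hgt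
      · have hv : dq < v.degree := by omega
        have : MvPolynomial.coeff v q = 0 := by
          apply MvPolynomial.coeff_eq_zero_of_totalDegree_lt
          exact hv
        have hvQ : MvPolynomial.coeff v Q = 0 := by
          rw [hQ, coeff_homogeneousComponent]
          split_ifs with h
          · exact this
          · rfl
        simp [this, hvQ]
      · have : MvPolynomial.coeff u p = 0 := by
          apply MvPolynomial.coeff_eq_zero_of_totalDegree_lt
          exact hgt
        have huP : MvPolynomial.coeff u P = 0 := by
          rw [hP, coeff_homogeneousComponent, if_neg hu]
        simp [this, huP]
  have hmem : m ∈ (p * q).support := by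
    rw [MvPolynomial.mem_support_iff, hcoeff]
    exact hmcoeff
  calc dp + dq = m.degree := hmdeg.symm
    _ ≤ (p * q).totalDegree := MvPolynomial.le_totalDegree hmem

/-- `g` divides `f` iff `f - Q_{f,g} · g = 0`. -/
theorem stmt0 {n : ℕ} {F : Type*} [Field F] (f g : MvPolynomial (Fin n) F)
    (hf : f ≠ 0) (hg : g ≠ 0)
    (hβ : MvPolynomial.eval (0 : Fin n → F) g ≠ 0)
    (hdeg : g.totalDegree ≤ f.totalDegree) :
    g ∣ f ↔ f - pseudoQuotient f g * g = 0 := by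
  constructor
  · rintro ⟨q, rfl⟩
    have hq : q ≠ 0 := by
      rintro rfl
      exact hf (mul_zero g)
    set β : F := MvPolynomial.eval (0 : Fin n → F) g with hβdef
    set gt : MvPolynomial (Fin n) F := 1 - MvPolynomial.C β⁻¹ * g with hgtdef
    have hconstg : MvPolynomial.constantCoeff g = β := by
      rw [hβdef, ← MvPolynomial.eval_zero]
    have hgt0 : MvPolynomial.constantCoeff gt = 0 := by
      rw [hgtdef]
      simp [hconstg, inv_mul_cancel₀ hβ]
    have hD : (g * q).totalDegree = g.totalDegree + q.totalDegree :=
      totalDegree_mul_eq hg hq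
    have hm : (g * q).totalDegree - g.totalDegree = q.totalDegree := by omega
    set m := q.totalDegree with hmdef
    have hPQ : pseudoQuotient (g * q) g = q := by
      rw [pseudoQuotient]
      simp only [← hβdef, ← hgtdef, hm]
      have hexp : (MvPolynomial.C β⁻¹ * (g * q)) * ∑ i ∈ Finset.range (m + 1), gt ^ i
          = q * (1 - gt ^ (m + 1)) := by
        have hgeq : MvPolynomial.C β⁻¹ * g = 1 - gt := by rw [hgtdef]; ring
        have hgeom : (∑ i ∈ Finset.range (m + 1), gt ^ i) * (gt - 1)
            = gt ^ (m + 1) - 1 := geom_sum_mul gt (m + 1)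
        linear_combination (∑ i ∈ Finset.range (m + 1), gt ^ i) * q * hgeq - q * hgeom
      rw [hexp]
      exact homTruncLE_key m q gt hgt0 le_rfl
    rw [hPQ]
    ring
  · intro h
    exact ⟨pseudoQuotient f g, by linear_combination h⟩
end

section
/- Let F be a field of characteristic zero, let f, g ∈ F[x₁,…,xₙ,y] be monic in y with g₀(x) := g(x,0) ≠ 0 and deg_y g ≤ deg_y (∂f/∂y)², and let a ∈ Fⁿ satisfy g(a,0) ≠ 0. Then substituting x := a into the cleared pseudo-resultant of f and g yields the cleared pseudo-resultant of the univariate polynomials f(a,y) and g(a,y); that is, R̂_{f,g}(a,y) = R̂_{f(a,·),g(a,·)}(y) as polynomials in F[y]. -/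
open Polynomial

/-- `Hom^y_{≤ k}(p)`: discard all terms of `p : R[X]` whose degree exceeds `k`. -/
noncomputable def yTrunc {R : Type*} [CommRing R] (k : ℕ) (p : Polynomial R) : Polynomial R :=
  ∑ i ∈ Finset.range (k + 1), Polynomial.C (p.coeff i) * Polynomial.X ^ i

/-- The cleared pseudo-resultant of `f` and `g` with respect to the (univariate) variable:
with `S = (∂f)²`, `D = deg S`, `d = deg g`, `g₀ = g(0)` and
`Q_num = Hom_{≤ D-d}[S · Σ_{i=0}^{D-d} g₀^{D-d-i} (g₀ - g)^i]`, it is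
`R̂_{f,g} = g₀^{D-d+1} · S - Q_num · g`. -/
noncomputable def clearedPseudoRes {R : Type*} [CommRing R] (f g : Polynomial R) :
    Polynomial R :=
  let S : Polynomial R := (Polynomial.derivative f) ^ 2
  let D : ℕ := S.natDegree
  let d : ℕ := g.natDegree
  let g0 : R := g.coeff 0
  let Qnum : Polynomial R := yTrunc (D - d)
    (S * ∑ i ∈ Finset.range (D - d + 1),
      Polynomial.C g0 ^ (D - d - i) * (Polynomial.C g0 - g) ^ i)
  Polynomial.C g0 ^ (D - d + 1) * S - Qnum * g

lemma yTrunc_map {R S : Type*} [CommRing R] [CommRing S] (φ : R →+* S) (k : ℕ)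
    (p : Polynomial R) : (yTrunc k p).map φ = yTrunc k (p.map φ) := by
  simp [yTrunc, Polynomial.map_sum, Polynomial.coeff_map]

/-- substituting `x := a` into the cleared pseudo-resultant of `f` and `g`
yields the cleared pseudo-resultant of the univariate polynomials `f(a,·)` and `g(a,·)`. -/
theorem stmt1 {n : ℕ} {F : Type*} [Field F] [CharZero F]
    (f g : Polynomial (MvPolynomial (Fin n) F))
    (hf : f.Monic) (hg : g.Monic)
    (hg0 : g.coeff 0 ≠ 0)
    (hdeg : g.natDegree ≤ ((Polynomial.derivative f) ^ 2).natDegree)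
    (a : Fin n → F)
    (ha : MvPolynomial.eval a (g.coeff 0) ≠ 0) :
    (clearedPseudoRes f g).map (MvPolynomial.eval a) =
      clearedPseudoRes (f.map (MvPolynomial.eval a)) (g.map (MvPolynomial.eval a)) := by
  set φ : MvPolynomial (Fin n) F →+* F := MvPolynomial.eval a with hφ
  by_cases hm : f.natDegree = 0
  · have hf1 : f = 1 := hf.natDegree_eq_zero.mp hm
    have hg1 : g = 1 := by
      apply hg.natDegree_eq_zero.mp
      simpa [hf1] using hdeg
    subst hf1; subst hg1
    simp [clearedPseudoRes, yTrunc]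
  · have hm1 : 0 < f.natDegree := Nat.pos_of_ne_zero hm
    have hdd : (Polynomial.derivative f).natDegree = f.natDegree - 1 := by
      have := Polynomial.degree_derivative_eq f hm1
      exact Polynomial.natDegree_eq_of_degree_eq_some this
    have hlc : (Polynomial.derivative f).leadingCoeff = (f.natDegree : MvPolynomial (Fin n) F) := by
      rw [Polynomial.leadingCoeff, hdd, Polynomial.coeff_derivative,
        Nat.sub_add_cancel hm1, Polynomial.coeff_natDegree, hf.leadingCoeff]
      rw [Nat.cast_sub hm1]
      push_cast
      ring
    have hlS : φ (((Polynomial.derivative f) ^ 2).leadingCoeff) ≠ 0 := by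
      rw [Polynomial.leadingCoeff_pow, hlc]
      simp [hm]
    have hSmap : ((Polynomial.derivative f) ^ 2).map φ
        = (Polynomial.derivative (f.map φ)) ^ 2 := by
      rw [Polynomial.derivative_map, Polynomial.map_pow]
    have hD : ((Polynomial.derivative (f.map φ)) ^ 2).natDegree
        = ((Polynomial.derivative f) ^ 2).natDegree := by
      rw [← hSmap]
      exact Polynomial.natDegree_map_of_leadingCoeff_ne_zero φ hlS
    have hdg : (g.map φ).natDegree = g.natDegree := hg.natDegree_map φ
    have hc0 : (g.map φ).coeff 0 = φ (g.coeff 0) := Polynomial.coeff_map φ 0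
    simp only [clearedPseudoRes, hD, hdg, hc0]
    rw [Polynomial.map_sub, Polynomial.map_mul, Polynomial.map_mul, Polynomial.map_pow,
      Polynomial.map_C, hSmap, yTrunc_map]
    simp only [Polynomial.map_mul, Polynomial.map_sum, Polynomial.map_pow, Polynomial.map_sub,
      Polynomial.map_C, hSmap]
end

section
/- Let F be a field of characteristic zero and suppose f ∈ F[x₁,…,xₙ,y] is monic in y and factors as f = g·h, where g is irreducible, monic in y, g does not divide h, g₀(x) := g(x,0) is nonzero, and deg_y g ≤ deg_y (∂f/∂y)². Then the cleared pseudo-resultant R̂_{f,g} is a nonzero polynomial in F[x₁,…,xₙ,y]. -/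
open Polynomial

/-- if `f` is monic in `y`, `f = g·h` with `g` irreducible, monic in `y`,
`g ∤ h`, `g₀ = g(x,0) ≠ 0` and `deg_y g ≤ deg_y (∂f/∂y)²`, then the cleared
pseudo-resultant `R̂_{f,g}` is a nonzero polynomial. -/
theorem stmt3 {n : ℕ} {F : Type*} [Field F] [CharZero F]
    (f g h : Polynomial (MvPolynomial (Fin n) F))
    (hf : f.Monic) (hfgh : f = g * h) (hgirr : Irreducible g) (hgmonic : g.Monic)
    (hgh : ¬ g ∣ h)
    (hg0 : g.coeff 0 ≠ 0)
    (hdeg : g.natDegree ≤ ((Polynomial.derivative f) ^ 2).natDegree) :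
    clearedPseudoRes f g ≠ 0 := by
  intro hR
  have hgprime : Prime g := by
    exact UniqueFactorizationMonoid.irreducible_iff_prime.mp hgirr
  have hdpos : 0 < g.natDegree := by
    rcases Nat.eq_zero_or_pos g.natDegree with h0 | h0
    · exact absurd (hgmonic.natDegree_eq_zero.mp h0 ▸ isUnit_one) hgirr.not_isUnit
    · exact h0
  have hdvd : g ∣ Polynomial.C (g.coeff 0) ^ (((Polynomial.derivative f) ^ 2).natDegree - g.natDegree + 1) * (Polynomial.derivative f) ^ 2 := by
    have := sub_eq_zero.mp hR
    exact ⟨_, this.trans (mul_comm _ g)⟩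
  have hndC : ¬ g ∣ Polynomial.C (g.coeff 0) := by
    intro hc
    have := Polynomial.natDegree_le_of_dvd hc (by simpa using hg0)
    simp [Polynomial.natDegree_C] at this
    omega
  have hdvdS : g ∣ (Polynomial.derivative f) ^ 2 :=
    (hgprime.dvd_mul.mp hdvd).resolve_left
      (fun hc => hndC (hgprime.dvd_of_dvd_pow hc))
  have hdvdf' : g ∣ Polynomial.derivative f := hgprime.dvd_of_dvd_pow hdvdS
  have hder : Polynomial.derivative f =
      Polynomial.derivative g * h + g * Polynomial.derivative h := by
    rw [hfgh, Polynomial.derivative_mul]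
  have hdvdg'h : g ∣ Polynomial.derivative g * h := by
    have h1 : g ∣ g * Polynomial.derivative h := Dvd.intro _ rfl
    have h2 := dvd_sub hdvdf' h1
    rw [hder] at h2
    simpa using h2
  have hg' : ¬ g ∣ Polynomial.derivative g := by
    intro hc
    have hgd0 : Polynomial.derivative g ≠ 0 := by
      intro hz
      have := Polynomial.natDegree_eq_zero_of_derivative_eq_zero hz
      omega
    have h1 := Polynomial.natDegree_le_of_dvd hc hgd0
    have h2 : (Polynomial.derivative g).natDegree < g.natDegree :=
      Polynomial.natDegree_derivative_lt hdpos.ne'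
    omega
  exact hgh ((hgprime.dvd_mul.mp hdvdg'h).resolve_left hg')
end

section
/- Let F be a field with algebraic closure F̄. Suppose f ∈ F[x₁,…,xₙ,y] is monic in y and factors as f = g·h where g is irreducible and g does not divide h. Let a ∈ Fⁿ be such that g(a,y) does not divide ((∂f/∂y)(a,y))² in F[y]. Then there exists u ∈ F̄ such that g(a,u) = 0, f(a,u) = 0, h(a,u) ≠ 0, and (∂f/∂y)(a,u) ≠ 0; in particular, u is a root of the univariate polynomial f(a,y) of multiplicity exactly 1. -/
/-- if `f = g·h` is monic in `y`, `g` irreducible, `g ∤ h`, and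
`a ∈ Fⁿ` is such that `g(a,y) ∤ ((∂f/∂y)(a,y))²` in `F[y]`, then there is
`u` in the algebraic closure of `F` with `g(a,u) = 0`, `f(a,u) = 0`,
`h(a,u) ≠ 0`, `(∂f/∂y)(a,u) ≠ 0`, and `u` is a root of `f(a,y)` of
multiplicity exactly `1`. -/
theorem stmt4 {n : ℕ} {F : Type*} [Field F]
    (f g h : Polynomial (MvPolynomial (Fin n) F))
    (hf : f.Monic) (hfgh : f = g * h) (hgirr : Irreducible g) (hgh : ¬ g ∣ h)
    (a : Fin n → F)
    (ha : ¬ (g.map (MvPolynomial.eval a)) ∣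
        ((Polynomial.derivative f).map (MvPolynomial.eval a)) ^ 2) :
    ∃ u : AlgebraicClosure F,
      Polynomial.eval u
        ((g.map (MvPolynomial.eval a)).map (algebraMap F (AlgebraicClosure F))) = 0 ∧
      Polynomial.eval u
        ((f.map (MvPolynomial.eval a)).map (algebraMap F (AlgebraicClosure F))) = 0 ∧
      Polynomial.eval u
        ((h.map (MvPolynomial.eval a)).map (algebraMap F (AlgebraicClosure F))) ≠ 0 ∧
      Polynomial.eval u
        (((Polynomial.derivative f).map (MvPolynomial.eval a)).map
          (algebraMap F (AlgebraicClosure F))) ≠ 0 ∧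
      Polynomial.rootMultiplicity u
        ((f.map (MvPolynomial.eval a)).map (algebraMap F (AlgebraicClosure F))) = 1 := by
  classical
  set K := AlgebraicClosure F
  set π := algebraMap F K
  set G : Polynomial K := (g.map (MvPolynomial.eval a)).map π with hGdef
  set H : Polynomial K := (h.map (MvPolynomial.eval a)).map π with hHdef
  set P : Polynomial K := (f.map (MvPolynomial.eval a)).map π with hPdef
  set D : Polynomial K := ((Polynomial.derivative f).map (MvPolynomial.eval a)).map π with hDdef
  have hP : P = G * H := by
    rw [hPdef, hGdef, hHdef, hfgh, Polynomial.map_mul, Polynomial.map_mul]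
  have hD : D = Polynomial.derivative P := by
    rw [hDdef, hPdef, Polynomial.derivative_map, Polynomial.derivative_map]
  have haK : ¬ G ∣ D ^ 2 := by
    rw [hGdef, hDdef, ← Polynomial.map_pow, Polynomial.map_dvd_map' π]
    exact ha
  have hD2 : D ^ 2 ≠ 0 := fun h0 => haK (h0 ▸ dvd_zero G)
  have hDne : D ≠ 0 := by
    intro h0; exact hD2 (by rw [h0]; ring)
  have hPmonic : P.Monic := (hf.map _).map _
  have hPne : P ≠ 0 := hPmonic.ne_zero
  have hGne : G ≠ 0 := by
    intro h0; exact hPne (by rw [hP, h0, zero_mul])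
  have key : ∃ u : K, G.eval u = 0 ∧ (Polynomial.derivative G).eval u ≠ 0 ∧ H.eval u ≠ 0 := by
    by_contra hcon
    push_neg at hcon
    apply haK
    apply Polynomial.Splits.dvd_of_roots_le_roots (IsAlgClosed.splits G) hGne
    rw [Multiset.le_iff_count]
    intro u
    rw [Polynomial.count_roots, Polynomial.count_roots,
      Polynomial.le_rootMultiplicity_iff hD2]
    by_cases hroot : G.eval u = 0
    · set m := Polynomial.rootMultiplicity u G with hm
      have hm1 : 1 ≤ m := (Polynomial.rootMultiplicity_pos hGne).2 hroot
      have hdvdG : (Polynomial.X - Polynomial.C u) ^ m ∣ G :=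
        Polynomial.pow_rootMultiplicity_dvd G u
      have hG' : (Polynomial.X - Polynomial.C u) ^ (m - 1) ∣ Polynomial.derivative G :=
        Polynomial.pow_sub_one_dvd_derivative_of_pow_dvd hdvdG
      by_cases hG'0 : (Polynomial.derivative G).eval u = 0
      · have h2 : 1 < m := (Polynomial.one_lt_rootMultiplicity_iff_isRoot hGne).2 ⟨hroot, hG'0⟩
        have hDdvd : (Polynomial.X - Polynomial.C u) ^ (m - 1) ∣ D := by
          rw [hD, hP, Polynomial.derivative_mul]
          exact dvd_add (hG'.mul_right _)
            (((pow_dvd_pow _ (Nat.sub_le m 1)).trans hdvdG).mul_right _)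
        calc (Polynomial.X - Polynomial.C u) ^ m
            ∣ (Polynomial.X - Polynomial.C u) ^ ((m - 1) * 2) := pow_dvd_pow _ (by omega)
          _ = ((Polynomial.X - Polynomial.C u) ^ (m - 1)) ^ 2 := by rw [pow_mul]
          _ ∣ D ^ 2 := pow_dvd_pow_of_dvd hDdvd 2
      · have hH : H.eval u = 0 := hcon u hroot hG'0
        have hXH : (Polynomial.X - Polynomial.C u) ∣ H := Polynomial.dvd_iff_isRoot.2 hH
        have hDdvd : (Polynomial.X - Polynomial.C u) ^ m ∣ D := by
          rw [hD, hP, Polynomial.derivative_mul]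
          refine dvd_add ?_ (hdvdG.mul_right _)
          calc (Polynomial.X - Polynomial.C u) ^ m
              = (Polynomial.X - Polynomial.C u) ^ (m - 1) *
                (Polynomial.X - Polynomial.C u) ^ 1 := by rw [← pow_add]; congr 1; omega
            _ ∣ (Polynomial.derivative G) * H :=
                mul_dvd_mul hG' (by rwa [pow_one])
        exact hDdvd.trans (dvd_pow_self D two_ne_zero)
    · rw [Polynomial.rootMultiplicity_eq_zero hroot, pow_zero]
      exact one_dvd _
  obtain ⟨u, hGu, hG'u, hHu⟩ := key
  have hPu : P.eval u = 0 := by rw [hP, Polynomial.eval_mul, hGu, zero_mul]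
  have hDu : D.eval u ≠ 0 := by
    rw [hD, hP, Polynomial.derivative_mul, Polynomial.eval_add, Polynomial.eval_mul,
      Polynomial.eval_mul, hGu, zero_mul, add_zero]
    exact mul_ne_zero hG'u hHu
  refine ⟨u, hGu, hPu, hHu, hDu, ?_⟩
  have h1 : 1 ≤ Polynomial.rootMultiplicity u P :=
    (Polynomial.rootMultiplicity_pos hPne).2 hPu
  have h2 : ¬ 1 < Polynomial.rootMultiplicity u P := by
    intro hlt
    exact hDu (hD ▸ ((Polynomial.one_lt_rootMultiplicity_iff_isRoot hPne).1 hlt).2)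
  omega
end

section
/- Let F be a field, let f, g ∈ F[y] be polynomials with g dividing f, let α ∈ F, and let e ≥ 2 be an integer such that (y−α)^e divides g. Then (y−α)^e divides (f′)², where f′ denotes the derivative of f with respect to y. -/
/-- if `g ∣ f` in `F[y]` and `(y-α)^e ∣ g` with `e ≥ 2`, then
`(y-α)^e ∣ (f')²`. -/
theorem stmt5 {F : Type*} [Field F] (f g : Polynomial F) (hdvd : g ∣ f)
    (α : F) (e : ℕ) (he : 2 ≤ e)
    (h : (Polynomial.X - Polynomial.C α) ^ e ∣ g) :
    (Polynomial.X - Polynomial.C α) ^ e ∣ (Polynomial.derivative f) ^ 2 := by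
  have h1 : (Polynomial.X - Polynomial.C α) ^ e ∣ f := h.trans hdvd
  have h2 : (Polynomial.X - Polynomial.C α) ^ (e - 1) ∣ Polynomial.derivative f :=
    Polynomial.pow_sub_one_dvd_derivative_of_pow_dvd h1
  calc (Polynomial.X - Polynomial.C α) ^ e
      ∣ ((Polynomial.X - Polynomial.C α) ^ (e - 1)) ^ 2 := by
        rw [← pow_mul]; exact pow_dvd_pow _ (by omega)
    _ ∣ (Polynomial.derivative f) ^ 2 := pow_dvd_pow_of_dvd h2 2
end

section
/- Let F be a field of characteristic zero, let P ∈ F[x₁,…,xₙ,y] be monic in y, and let u ∈ F satisfy P(0,u) = 0 and (∂P/∂y)(0,u) ≠ 0. Then for every integer k ≥ 0 there exists a polynomial Φ_k ∈ F[x₁,…,xₙ] such that Φ_k(0) = u and P(x, Φ_k(x)) lies in the ideal ⟨x₁,…,xₙ⟩^{k+1} of F[x₁,…,xₙ]. -/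
open MvPolynomial in
private lemma mem_I_iff {n : ℕ} {F : Type*} [Field F] (f : MvPolynomial (Fin n) F) :
    f ∈ Ideal.span (Set.range (MvPolynomial.X : Fin n → MvPolynomial (Fin n) F)) ↔
      MvPolynomial.eval (0 : Fin n → F) f = 0 := by
  rw [← Set.image_univ, MvPolynomial.mem_ideal_span_X_image]
  rw [MvPolynomial.eval_zero, MvPolynomial.constantCoeff_eq]
  constructor
  · intro h
    by_contra hc
    obtain ⟨i, -, hi⟩ := h 0 (by simpa using hc)
    simp at hi
  · intro h m hm
    have hm0 : m ≠ 0 := by rintro rfl; exact (MvPolynomial.mem_support_iff.mp hm) h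
    obtain ⟨i, hi⟩ := Finsupp.ne_iff.mp hm0
    exact ⟨i, trivial, by simpa using hi⟩

private lemma eval_comm {n : ℕ} {F : Type*} [Field F]
    (P : Polynomial (MvPolynomial (Fin n) F)) (Φ : MvPolynomial (Fin n) F) :
    MvPolynomial.eval (0 : Fin n → F) (Polynomial.eval Φ P) =
      Polynomial.eval (MvPolynomial.eval (0 : Fin n → F) Φ)
        (P.map (MvPolynomial.eval (0 : Fin n → F))) := by
  rw [Polynomial.eval_map, Polynomial.eval, Polynomial.hom_eval₂]
  rfl

/-- Newton iteration: if `P ∈ F[x₁,…,xₙ][y]` is monic in `y`, and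
`u ∈ F` satisfies `P(0,u) = 0` and `(∂P/∂y)(0,u) ≠ 0`, then for every `k ≥ 0`
there is `Φₖ ∈ F[x₁,…,xₙ]` with `Φₖ(0) = u` and `P(x,Φₖ(x)) ∈ ⟨x₁,…,xₙ⟩^{k+1}`. -/
theorem stmt6 {n : ℕ} {F : Type*} [Field F] [CharZero F]
    (P : Polynomial (MvPolynomial (Fin n) F)) (hP : P.Monic) (u : F)
    (h0 : Polynomial.eval u (P.map (MvPolynomial.eval (0 : Fin n → F))) = 0)
    (h1 : Polynomial.eval u
        ((Polynomial.derivative P).map (MvPolynomial.eval (0 : Fin n → F))) ≠ 0) :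
    ∀ k : ℕ, ∃ Φ : MvPolynomial (Fin n) F,
      MvPolynomial.eval (0 : Fin n → F) Φ = u ∧
      Polynomial.eval Φ P ∈
        (Ideal.span (Set.range (MvPolynomial.X : Fin n → MvPolynomial (Fin n) F))) ^ (k + 1) := by
  set I := Ideal.span (Set.range (MvPolynomial.X : Fin n → MvPolynomial (Fin n) F)) with hI
  set c : F := Polynomial.eval u
      ((Polynomial.derivative P).map (MvPolynomial.eval (0 : Fin n → F))) with hc
  have hIker : ∀ k : ℕ, ∀ f ∈ I ^ (k + 1), MvPolynomial.eval (0 : Fin n → F) f = 0 := by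
    intro k f hf
    exact (mem_I_iff f).mp (Ideal.pow_le_self (Nat.succ_ne_zero k) hf)
  intro k
  induction k with
  | zero =>
    refine ⟨MvPolynomial.C u, by simp, ?_⟩
    rw [pow_one, mem_I_iff, eval_comm]
    simpa using h0
  | succ k ih =>
    obtain ⟨Φ, hΦ0, hΦ⟩ := ih
    set D : MvPolynomial (Fin n) F := Polynomial.eval Φ (Polynomial.derivative P) with hD
    have hD0 : MvPolynomial.eval (0 : Fin n → F) D = c := by
      rw [hD, eval_comm, hΦ0, hc]
    set g : MvPolynomial (Fin n) F := 1 - MvPolynomial.C c⁻¹ * D with hg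
    have hgI : g ∈ I := by
      rw [mem_I_iff, hg, map_sub, map_mul, map_one, MvPolynomial.eval_C, hD0,
        inv_mul_cancel₀ h1, sub_self]
    have hDg : D * (MvPolynomial.C c⁻¹) = 1 - g := by
      rw [hg]; ring
    set Q : MvPolynomial (Fin n) F :=
      MvPolynomial.C c⁻¹ * (∑ i ∈ Finset.range (k + 1), g ^ i) with hQ
    have hDQ : D * Q = 1 - g ^ (k + 1) := by
      rw [hQ, ← mul_assoc, hDg]
      have := geom_sum_mul g (k + 1)
      linear_combination -this
    set e : MvPolynomial (Fin n) F := Polynomial.eval Φ P * Q with he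
    have heI : e ∈ I ^ (k + 1) := Ideal.mul_mem_right _ _ hΦ
    refine ⟨Φ + (-e), ?_, ?_⟩
    · rw [map_add, map_neg, hΦ0, hIker k e heI]
      ring
    · obtain ⟨r, hr⟩ := P.binomExpansion Φ (-e)
      rw [hr]
      have key : Polynomial.eval Φ P + D * (-e) = Polynomial.eval Φ P * g ^ (k + 1) := by
        rw [he]
        linear_combination (-(Polynomial.eval Φ P)) * hDQ
      rw [key]
      have h2 : (k + 1) + 1 = (k + 1) + 1 := rfl
      rw [pow_succ]
      refine Ideal.add_mem _ (Ideal.mul_mem_mul hΦ (Ideal.pow_le_self (Nat.succ_ne_zero k)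
        (Ideal.pow_mem_pow hgI (k + 1)))) ?_
      have : r * (-e) ^ 2 = (r * e) * e := by ring
      rw [this]
      exact Ideal.mul_mem_mul (Ideal.mul_mem_left _ _ heI)
        (Ideal.pow_le_self (Nat.succ_ne_zero k) heI)
end

section
/- Let F be a field of characteristic zero. Let φ ∈ F[x₁,…,xₙ] and let G ∈ F[x₁,…,xₙ,y] be irreducible and monic in y with deg_y G = d_y, with the total degree of G in the variables x₁,…,xₙ at most d, and such that G(x, φ(x)) ∈ ⟨x₁,…,xₙ⟩^k for some integer k > 2·d_y·d. If H ∈ F[x₁,…,xₙ,y] is a nonzero polynomial that is monic in y, has deg_y H ≤ d_y, has total degree in the variables x₁,…,xₙ at most d, and satisfies H(x, φ(x)) ∈ ⟨x₁,…,xₙ⟩^k, then H = G. -/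
open Polynomial

section Lemmas

lemma deg_mem_span_pow {σ : Type*} {F : Type*} [Field F] (k : ℕ)
    (p : MvPolynomial σ F)
    (hp : p ∈ (Ideal.span (Set.range (MvPolynomial.X : σ → MvPolynomial σ F))) ^ k) :
    ∀ m ∈ p.support, k ≤ m.sum fun _ e => e := by
  classical
  induction k generalizing p with
  | zero => intro m _; exact Nat.zero_le _
  | succ k ih =>
    rw [pow_succ] at hp
    refine Submodule.mul_induction_on hp ?_ ?_
    · intro a ha b hb m hm
      have hbase : ∀ q ∈ Ideal.span (Set.range (MvPolynomial.X : σ → MvPolynomial σ F)),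
          ∀ mb ∈ MvPolynomial.support q, 1 ≤ mb.sum fun _ e => e := by
        intro q hq
        induction hq using Submodule.span_induction with
        | mem x hx =>
          obtain ⟨i, rfl⟩ := hx
          intro mb hmb
          rw [MvPolynomial.support_X] at hmb
          simp only [Finset.mem_singleton] at hmb
          subst hmb
          simp [Finsupp.sum_single_index]
        | zero => simp
        | add x y _ _ hx hy =>
          intro mb hmb
          rcases Finset.mem_union.mp (MvPolynomial.support_add hmb) with h | h
          · exact hx mb h
          · exact hy mb h
        | smul r x _ hx =>
          intro mb hmb
          have : (r • x : MvPolynomial σ F) = r * x := rfl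
          rw [this] at hmb
          obtain ⟨ma, _, mc, hmc, rfl⟩ := Finset.mem_add.mp (MvPolynomial.support_mul r x hmb)
          have := hx mc hmc
          rw [Finsupp.sum_add_index (by simp) (by intros; rfl)]
          omega
      obtain ⟨ma, hma, mb, hmb, rfl⟩ := Finset.mem_add.mp (MvPolynomial.support_mul a b hm)
      have h1 : k ≤ ma.sum fun _ e => e := ih a ha ma hma
      have h2 : 1 ≤ mb.sum fun _ e => e := hbase b hb mb hmb
      rw [Finsupp.sum_add_index (by simp) (by intros; rfl)]
      omega
    · intro x y hx hy m hm
      rcases Finset.mem_union.mp (MvPolynomial.support_add hm) with h | h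
      · exact hx m h
      · exact hy m h

lemma eq_zero_of_mem_span_pow {σ : Type*} {F : Type*} [Field F] {k : ℕ}
    {p : MvPolynomial σ F}
    (hp : p ∈ (Ideal.span (Set.range (MvPolynomial.X : σ → MvPolynomial σ F))) ^ k)
    (hd : p.totalDegree < k) : p = 0 := by
  by_contra h0
  obtain ⟨m, hm⟩ := (MvPolynomial.support_nonempty.mpr h0)
  have h1 := deg_mem_span_pow k p hp m hm
  have h2 : (m.sum fun _ e => e) ≤ p.totalDegree := MvPolynomial.le_totalDegree hm
  omega

variable {R : Type*} [CommRing R]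

lemma row_sum_eq (P : R[X]) (e N : ℕ) (h : e + P.natDegree < N) :
    ∑ j ∈ Finset.range N, (if e ≤ j then C (P.coeff (j - e)) else 0) * X ^ j
      = X ^ e * P := by
  have he : e ≤ N := by omega
  rw [Finset.range_eq_Ico, ← Finset.sum_Ico_consecutive _ (Nat.zero_le e) he]
  have h1 : ∑ j ∈ Finset.Ico 0 e, (if e ≤ j then C (P.coeff (j - e)) else 0) * X ^ j = 0 := by
    apply Finset.sum_eq_zero
    intro j hj
    rw [Finset.mem_Ico] at hj
    rw [if_neg (by omega), zero_mul]
  rw [h1, zero_add, Finset.sum_Ico_eq_sum_range]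
  have h2 : ∀ t ∈ Finset.range (N - e),
      (if e ≤ e + t then C (P.coeff (e + t - e)) else 0) * X ^ (e + t)
        = X ^ e * (C (P.coeff t) * X ^ t) := by
    intro t _
    rw [if_pos (by omega), Nat.add_sub_cancel_left]
    ring
  rw [Finset.sum_congr rfl h2, ← Finset.mul_sum]
  congr 1
  conv_rhs => rw [P.as_sum_range' (N - e) (by omega)]
  exact Finset.sum_congr rfl fun t _ => by rw [C_mul_X_pow_eq_monomial]

lemma row_sum_eq_fin (P : R[X]) (e N : ℕ) (h : e + P.natDegree < N) :
    ∑ j : Fin N, (if e ≤ (j : ℕ) then C (P.coeff ((j : ℕ) - e)) else 0) * X ^ (j : ℕ)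
      = X ^ e * P := by
  rw [Fin.sum_univ_eq_sum_range (fun j => (if e ≤ j then C (P.coeff (j - e)) else 0) * X ^ j)]
  exact row_sum_eq P e N h

/-- A Sylvester-style matrix of `G` and `H`. -/
noncomputable def syl (G H : R[X]) :
    Matrix (Fin (G.natDegree + H.natDegree)) (Fin (G.natDegree + H.natDegree)) R :=
  fun i j =>
    if (i : ℕ) < H.natDegree then
      (if (i : ℕ) ≤ (j : ℕ) then G.coeff ((j : ℕ) - (i : ℕ)) else 0)
    else
      (if (i : ℕ) - H.natDegree ≤ (j : ℕ) then
        H.coeff ((j : ℕ) - ((i : ℕ) - H.natDegree)) else 0)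

lemma syl_row (G H : R[X]) (i : Fin (G.natDegree + H.natDegree)) :
    ∑ j : Fin (G.natDegree + H.natDegree), C (syl G H i j) * X ^ (j : ℕ)
      = if (i : ℕ) < H.natDegree then X ^ (i : ℕ) * G
        else X ^ ((i : ℕ) - H.natDegree) * H := by
  have hiN := i.isLt
  by_cases hi : (i : ℕ) < H.natDegree
  · rw [if_pos hi, ← row_sum_eq_fin G (i : ℕ) (G.natDegree + H.natDegree) (by omega)]
    refine Finset.sum_congr rfl fun j _ => ?_
    rw [syl, if_pos hi, apply_ite C, map_zero]
  · rw [if_neg hi, ← row_sum_eq_fin H ((i : ℕ) - H.natDegree) (G.natDegree + H.natDegree)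
      (by omega)]
    refine Finset.sum_congr rfl fun j _ => ?_
    rw [syl, if_neg hi, apply_ite C, map_zero]

lemma syl_entry_cases (G H : R[X]) (i j : Fin (G.natDegree + H.natDegree)) :
    syl G H i j = 0 ∨ (∃ t, syl G H i j = G.coeff t) ∨ ∃ t, syl G H i j = H.coeff t := by
  rw [syl]
  split_ifs
  · exact Or.inr (Or.inl ⟨_, rfl⟩)
  · exact Or.inl rfl
  · exact Or.inr (Or.inr ⟨_, rfl⟩)
  · exact Or.inl rfl

lemma det_syl_mem (G H : R[X]) (hN : 0 < G.natDegree + H.natDegree) :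
    C ((syl G H).det) ∈ Ideal.span ({G, H} : Set R[X]) := by
  classical
  set N := G.natDegree + H.natDegree with hNdef
  set M' : Matrix (Fin N) (Fin N) R[X] := (syl G H).map (C : R →+* R[X]).toFun with hM'
  set v : Fin N → R[X] := fun j => X ^ (j : ℕ) with hv
  have hrow : M'.mulVec v = fun (i : Fin N) =>
      if (i : ℕ) < H.natDegree then X ^ (i : ℕ) * G
        else X ^ ((i : ℕ) - H.natDegree) * H := by
    funext i
    rw [Matrix.mulVec, dotProduct, ← syl_row G H i]
    rfl
  have hadj : (M'.adjugate).mulVec (M'.mulVec v) = M'.det • v := by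
    rw [Matrix.mulVec_mulVec, Matrix.adjugate_mul, Matrix.smul_mulVec, Matrix.one_mulVec]
  have hdet : (C : R →+* R[X]) (syl G H).det = M'.det := RingHom.map_det _ _
  set j0 : Fin N := ⟨0, hN⟩ with hj0
  have h0 : M'.det = ∑ i : Fin N, M'.adjugate j0 i *
      (if (i : ℕ) < H.natDegree then X ^ (i : ℕ) * G
        else X ^ ((i : ℕ) - H.natDegree) * H) := by
    have := congrFun hadj j0
    rw [hrow] at this
    rw [Matrix.mulVec, dotProduct] at this
    have hvj0 : v j0 = 1 := by simp [hv, hj0]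
    rw [Pi.smul_apply, hvj0, smul_eq_mul, mul_one] at this
    exact this.symm
  rw [show (C ((syl G H).det) : R[X]) = M'.det from hdet, h0]
  refine Ideal.sum_mem _ fun i _ => Ideal.mul_mem_left _ _ ?_
  split_ifs
  · exact Ideal.mul_mem_left _ _ (Ideal.subset_span (by simp))
  · exact Ideal.mul_mem_left _ _ (Ideal.subset_span (by simp))

end Lemmas

set_option maxHeartbeats 2000000 in
set_option synthInstance.maxHeartbeats 400000 in
/-- uniqueness of minimal polynomials of approximate roots:
if `G` is irreducible, monic in `y`, with `deg_y G = d_y`, `x`-degree at most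
`d`, and `G(x,φ(x)) ∈ ⟨x₁,…,xₙ⟩^k` for `k > 2·d_y·d`, then any nonzero `H`
monic in `y`, of `y`-degree at most `d_y` and `x`-degree at most `d` with
`H(x,φ(x)) ∈ ⟨x₁,…,xₙ⟩^k` must equal `G`. -/
theorem stmt9 {n : ℕ} {F : Type*} [Field F] [CharZero F]
    (φ : MvPolynomial (Fin n) F) (G H : Polynomial (MvPolynomial (Fin n) F))
    (d_y d k : ℕ)
    (hGirr : Irreducible G) (hGmonic : G.Monic) (hGdeg : G.natDegree = d_y)
    (hGcoeff : ∀ i, (G.coeff i).totalDegree ≤ d)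
    (hk : 2 * d_y * d < k)
    (hGφ : Polynomial.eval φ G ∈
      (Ideal.span (Set.range (MvPolynomial.X : Fin n → MvPolynomial (Fin n) F))) ^ k)
    (hH0 : H ≠ 0) (hHmonic : H.Monic) (hHdeg : H.natDegree ≤ d_y)
    (hHcoeff : ∀ i, (H.coeff i).totalDegree ≤ d)
    (hHφ : Polynomial.eval φ H ∈
      (Ideal.span (Set.range (MvPolynomial.X : Fin n → MvPolynomial (Fin n) F))) ^ k) :
    H = G := by
  classical
  have hdy1 : 1 ≤ d_y := by
    by_contra h
    have h0 : G.natDegree = 0 := by omega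
    rw [eq_one_of_monic_natDegree_zero hGmonic h0] at hGirr
    exact hGirr.not_isUnit isUnit_one
  have hN : 0 < G.natDegree + H.natDegree := by omega
  set N := G.natDegree + H.natDegree with hNdef
  -- step 1 : the determinant of the Sylvester matrix lies in m^k and has small degree
  obtain ⟨a, b, hab⟩ := Ideal.mem_span_pair.mp (det_syl_mem G H hN)
  have hdet_mem : (syl G H).det ∈
      (Ideal.span (Set.range (MvPolynomial.X : Fin n → MvPolynomial (Fin n) F))) ^ k := by
    have h1 := congrArg (Polynomial.eval φ) hab
    rw [Polynomial.eval_C, Polynomial.eval_add, Polynomial.eval_mul, Polynomial.eval_mul] at h1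
    rw [← h1]
    exact Ideal.add_mem _ (Ideal.mul_mem_left _ _ hGφ) (Ideal.mul_mem_left _ _ hHφ)
  have hdeg : (syl G H).det.totalDegree ≤ 2 * d_y * d := by
    rw [Matrix.det_apply]
    refine (MvPolynomial.totalDegree_finset_sum _ _).trans (Finset.sup_le fun σ _ => ?_)
    have hsmul : ∀ x : MvPolynomial (Fin n) F, ∀ u : ℤˣ,
        (u • x).totalDegree = x.totalDegree := by
      intro x u
      rcases Int.units_eq_one_or u with h | h <;> subst h
      · rw [one_smul]
      · have : ((-1 : ℤˣ) • x) = -x := by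
          rw [Units.smul_def]
          simp
        rw [this, MvPolynomial.totalDegree_neg]
    rw [hsmul]
    refine (MvPolynomial.totalDegree_finset_prod _ _).trans ?_
    have hbound : ∀ i : Fin N, (syl G H (σ i) i).totalDegree ≤ d := by
      intro i
      rcases syl_entry_cases G H (σ i) i with h | ⟨t, h⟩ | ⟨t, h⟩ <;> rw [h]
      · simp
      · exact hGcoeff t
      · exact hHcoeff t
    refine (Finset.sum_le_sum fun i _ => hbound i).trans ?_
    rw [Finset.sum_const, Finset.card_univ, Fintype.card_fin, smul_eq_mul]
    have : N ≤ 2 * d_y := by omega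
    exact Nat.mul_le_mul_right d this
  have hdet0 : (syl G H).det = 0 :=
    eq_zero_of_mem_span_pow hdet_mem (lt_of_le_of_lt hdeg hk)
  -- step 2 : over the fraction field, get a linear dependence of the rows
  set f := algebraMap (MvPolynomial (Fin n) F) (FractionRing (MvPolynomial (Fin n) F)) with hf
  have hinj : Function.Injective f :=
    IsFractionRing.injective (MvPolynomial (Fin n) F) (FractionRing (MvPolynomial (Fin n) F))
  set G' := G.map f with hG'
  set H' := H.map f with hH'
  have hdetK : ((((syl G H).map f).transpose)).det = 0 := by
    rw [Matrix.det_transpose, ← RingHom.mapMatrix_apply, ← RingHom.map_det, hdet0, map_zero]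
  obtain ⟨w, hw0, hww⟩ := Matrix.exists_mulVec_eq_zero_iff.mpr hdetK
  have hww' : ∀ j : Fin N, ∑ i : Fin N, f (syl G H i j) * w i = 0 := by
    intro j
    have := congrFun hww j
    rw [Matrix.mulVec, dotProduct] at this
    simpa [Matrix.transpose_apply, Matrix.map_apply] using this
  -- mapped row identity
  have hrowK : ∀ i : Fin N,
      ∑ j : Fin N, C (f (syl G H i j)) * X ^ (j : ℕ)
        = if (i : ℕ) < H.natDegree then X ^ (i : ℕ) * G'
          else X ^ ((i : ℕ) - H.natDegree) * H' := by
    intro i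
    have h1 := congrArg (Polynomial.map f) (syl_row G H i)
    rw [Polynomial.map_sum] at h1
    simp only [Polynomial.map_mul, Polynomial.map_pow, Polynomial.map_C, Polynomial.map_X,
      apply_ite (Polynomial.map f)] at h1
    exact h1
  -- assemble the dependency a*G' + b*H' = 0
  set aa : (FractionRing (MvPolynomial (Fin n) F))[X] := ∑ i ∈ Finset.univ.filter (fun i : Fin N => (i : ℕ) < H.natDegree),
      C (w i) * X ^ (i : ℕ) with haa
  set bb : (FractionRing (MvPolynomial (Fin n) F))[X] := ∑ i ∈ Finset.univ.filter (fun i : Fin N => ¬ (i : ℕ) < H.natDegree),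
      C (w i) * X ^ ((i : ℕ) - H.natDegree) with hbb
  have hdep : aa * G' + bb * H' = 0 := by
    rw [haa, hbb, Finset.sum_mul, Finset.sum_mul]
    have e1 : ∀ i ∈ Finset.univ.filter (fun i : Fin N => (i : ℕ) < H.natDegree),
        C (w i) * X ^ (i : ℕ) * G'
          = C (w i) * (if (i : ℕ) < H.natDegree then X ^ (i : ℕ) * G'
            else X ^ ((i : ℕ) - H.natDegree) * H') := by
      intro i hi
      rw [Finset.mem_filter] at hi
      rw [if_pos hi.2, mul_assoc]
    have e2 : ∀ i ∈ Finset.univ.filter (fun i : Fin N => ¬ (i : ℕ) < H.natDegree),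
        C (w i) * X ^ ((i : ℕ) - H.natDegree) * H'
          = C (w i) * (if (i : ℕ) < H.natDegree then X ^ (i : ℕ) * G'
            else X ^ ((i : ℕ) - H.natDegree) * H') := by
      intro i hi
      rw [Finset.mem_filter] at hi
      rw [if_neg hi.2, mul_assoc]
    rw [Finset.sum_congr rfl e1, Finset.sum_congr rfl e2,
      Finset.sum_filter_add_sum_filter_not]
    calc ∑ i : Fin N, C (w i) * (if (i : ℕ) < H.natDegree then X ^ (i : ℕ) * G'
            else X ^ ((i : ℕ) - H.natDegree) * H')
        = ∑ i : Fin N, C (w i) * ∑ j : Fin N, C (f (syl G H i j)) * X ^ (j : ℕ) := by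
          exact Finset.sum_congr rfl fun i _ => by rw [hrowK i]
      _ = ∑ i : Fin N, ∑ j : Fin N, C (f (syl G H i j) * w i) * X ^ (j : ℕ) := by
          refine Finset.sum_congr rfl fun i _ => ?_
          rw [Finset.mul_sum]
          refine Finset.sum_congr rfl fun j _ => ?_
          rw [map_mul]
          ring
      _ = ∑ j : Fin N, ∑ i : Fin N, C (f (syl G H i j) * w i) * X ^ (j : ℕ) :=
          Finset.sum_comm
      _ = 0 := by
          refine Finset.sum_eq_zero fun j _ => ?_
          rw [← Finset.sum_mul,
            ← map_sum (C : FractionRing (MvPolynomial (Fin n) F) →+* _)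
              (fun i => f (syl G H i j) * w i) Finset.univ,
            hww' j, map_zero, zero_mul]
  -- G' is prime, H' nonzero
  have hG'monic : G'.Monic := hGmonic.map f
  have hH'monic : H'.Monic := hHmonic.map f
  have hG'irr : Irreducible G' :=
    (hGmonic.irreducible_iff_irreducible_map_fraction_map).mp hGirr
  have hG'prime : Prime G' := hG'irr.prime
  have hdvd' : G' ∣ H' := by
    by_contra hnd
    have hbb0 : bb = 0 := by
      by_contra hb
      have hdvdmul : G' ∣ bb * H' := ⟨-aa, by linear_combination hdep⟩
      rcases hG'prime.2.2 bb H' hdvdmul with h | h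
      · have hdb : bb.natDegree < G'.natDegree := by
          have h1 : bb.natDegree ≤ G.natDegree - 1 := by
            refine Polynomial.natDegree_sum_le_of_forall_le _ _ fun i hi => ?_
            rw [Finset.mem_filter] at hi
            refine (Polynomial.natDegree_mul_le).trans ?_
            rw [Polynomial.natDegree_C, Polynomial.natDegree_X_pow]
            have := i.isLt
            omega
          have h2 : G'.natDegree = G.natDegree := hGmonic.natDegree_map f
          omega
        exact absurd (Polynomial.natDegree_le_of_dvd h hb) (by omega)
      · exact hnd h
    have haa0 : aa = 0 := by
      rw [hbb0, zero_mul, add_zero] at hdep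
      rcases mul_eq_zero.mp hdep with h | h
      · exact h
      · exact absurd h hG'monic.ne_zero
    apply hw0
    funext i
    by_cases hi : (i : ℕ) < H.natDegree
    · have hc : aa.coeff (i : ℕ) = w i := by
        rw [haa, Polynomial.finset_sum_coeff]
        rw [Finset.sum_eq_single_of_mem i (Finset.mem_filter.mpr ⟨Finset.mem_univ _, hi⟩)]
        · rw [Polynomial.coeff_C_mul, Polynomial.coeff_X_pow, if_pos rfl, mul_one]
        · intro j _ hji
          rw [Polynomial.coeff_C_mul, Polynomial.coeff_X_pow, if_neg, mul_zero]
          exact fun hh => hji (Fin.ext hh.symm)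
      rw [haa0] at hc
      simpa using hc.symm
    · have hc : bb.coeff ((i : ℕ) - H.natDegree) = w i := by
        rw [hbb, Polynomial.finset_sum_coeff]
        rw [Finset.sum_eq_single_of_mem i (Finset.mem_filter.mpr ⟨Finset.mem_univ _, hi⟩)]
        · rw [Polynomial.coeff_C_mul, Polynomial.coeff_X_pow, if_pos rfl, mul_one]
        · intro j hj hji
          rw [Finset.mem_filter] at hj
          rw [Polynomial.coeff_C_mul, Polynomial.coeff_X_pow, if_neg, mul_zero]
          intro hh
          apply hji
          apply Fin.ext
          have := hj.2
          omega
      rw [hbb0] at hc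
      simpa using hc.symm
  -- descend divisibility and conclude
  have hdvd : G ∣ H := (Polynomial.map_dvd_map f hinj hGmonic).mp hdvd'
  obtain ⟨Q, hQ⟩ := hdvd
  have hQ0 : Q ≠ 0 := by
    rintro rfl
    rw [mul_zero] at hQ
    exact hH0 hQ
  have hQmonic : Q.Monic := hGmonic.of_mul_monic_left (hQ ▸ hHmonic)
  have hdegQ : Q.natDegree = 0 := by
    have := Polynomial.natDegree_mul hGmonic.ne_zero hQ0
    rw [← hQ] at this
    omega
  rw [hQ, hQmonic.natDegree_eq_zero.mp hdegQ, mul_one]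
end

section
/- Let F be a field. Let G, H ∈ F[x₁,…,xₙ,y] be monic in y with 1 ≤ deg_y G ≤ d_y and 1 ≤ deg_y H ≤ d_y, and with total degree in the variables x₁,…,xₙ at most d. Suppose there exist φ ∈ F[x₁,…,xₙ] and an integer k > 2·d_y·d such that both G(x,φ(x)) and H(x,φ(x)) lie in ⟨x₁,…,xₙ⟩^k. Then G and H have a common non-unit factor in F[x₁,…,xₙ,y]. -/
open Polynomial Matrix

namespace Stmt10Aux

variable {R : Type*} [CommRing R]

/-- Sylvester-style matrix of `G` and `H`. Columns indexed by `Fin (b + a)`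
(`b = H.natDegree`, `a = G.natDegree`): the first `b` columns are shifts of `G`,
the last `a` columns are shifts of `H`. Row `i` records the coefficient of `X^i`. -/
noncomputable def syl (G H : R[X]) :
    Matrix (Fin (H.natDegree + G.natDegree)) (Fin (H.natDegree + G.natDegree)) R :=
  fun i => Fin.addCases
    (fun j : Fin H.natDegree => if (j : ℕ) ≤ (i : ℕ) then G.coeff (i - j) else 0)
    (fun j : Fin G.natDegree => if (j : ℕ) ≤ (i : ℕ) then H.coeff (i - j) else 0)

noncomputable def polyA (G H : R[X]) (v : Fin (H.natDegree + G.natDegree) → R) : R[X] :=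
  ∑ j : Fin H.natDegree, C (v (Fin.castAdd G.natDegree j)) * X ^ (j : ℕ)

noncomputable def polyB (G H : R[X]) (v : Fin (H.natDegree + G.natDegree) → R) : R[X] :=
  ∑ j : Fin G.natDegree, C (v (Fin.natAdd H.natDegree j)) * X ^ (j : ℕ)

lemma coeff_key (G H : R[X]) (v : Fin (H.natDegree + G.natDegree) → R)
    (i : Fin (H.natDegree + G.natDegree)) :
    (polyA G H v * G + polyB G H v * H).coeff (i : ℕ) = (syl G H *ᵥ v) i := by
  have hA : ∀ (P : R[X]) (m : ℕ) (w : Fin m → R),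
      ((∑ j : Fin m, C (w j) * X ^ (j : ℕ)) * P).coeff (i : ℕ)
        = ∑ j : Fin m, (if (j : ℕ) ≤ (i : ℕ) then P.coeff (i - j) else 0) * w j := by
    intro P m w
    rw [Finset.sum_mul, finset_sum_coeff]
    refine Finset.sum_congr rfl fun j _ => ?_
    rw [mul_right_comm, coeff_mul_X_pow', coeff_C_mul]
    split_ifs <;> ring
  rw [coeff_add, polyA, polyB, hA, hA]
  simp only [Matrix.mulVec, dotProduct, Fin.sum_univ_add, syl,
    Fin.addCases_left, Fin.addCases_right]

lemma natDegree_polyAux_lt {m : ℕ} (hm : 1 ≤ m) (w : Fin m → R) :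
    (∑ j : Fin m, C (w j) * X ^ (j : ℕ)).natDegree < m := by
  have : (∑ j : Fin m, C (w j) * X ^ (j : ℕ)).natDegree ≤ m - 1 := by
    refine natDegree_sum_le_of_forall_le _ _ fun j _ => ?_
    refine (natDegree_C_mul_X_pow_le _ _).trans ?_
    omega
  omega

lemma natDegree_comb_lt (G H : R[X]) (hG : 1 ≤ G.natDegree) (hH : 1 ≤ H.natDegree)
    (v : Fin (H.natDegree + G.natDegree) → R) :
    (polyA G H v * G + polyB G H v * H).natDegree < H.natDegree + G.natDegree := by
  have h1 : (polyA G H v * G).natDegree < H.natDegree + G.natDegree := by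
    refine lt_of_le_of_lt (natDegree_mul_le) ?_
    have := natDegree_polyAux_lt hH (fun j : Fin H.natDegree => v (Fin.castAdd G.natDegree j))
    rw [polyA]; omega
  have h2 : (polyB G H v * H).natDegree < H.natDegree + G.natDegree := by
    refine lt_of_le_of_lt (natDegree_mul_le) ?_
    have := natDegree_polyAux_lt hG (fun j : Fin G.natDegree => v (Fin.natAdd H.natDegree j))
    rw [polyB]; omega
  exact lt_of_le_of_lt (natDegree_add_le _ _) (by omega)

lemma exists_bezout (G H : R[X]) (hG : 1 ≤ G.natDegree) (hH : 1 ≤ H.natDegree) :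
    ∃ A B : R[X], A * G + B * H = C (syl G H).det := by
  have hN : 0 < H.natDegree + G.natDegree := by omega
  set v := (syl G H).cramer (Pi.single ⟨0, hN⟩ 1) with hv
  refine ⟨polyA G H v, polyB G H v, ?_⟩
  ext m
  rw [coeff_C]
  by_cases hm : m < H.natDegree + G.natDegree
  · have h := coeff_key G H v ⟨m, hm⟩
    rw [show ((⟨m, hm⟩ : Fin _) : ℕ) = m from rfl] at h
    rw [h, hv, Matrix.mulVec_cramer]
    simp only [Pi.smul_apply, Pi.single_apply, smul_eq_mul]
    simp only [Fin.mk_eq_mk]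
    split_ifs <;> ring
  · push_neg at hm
    rw [coeff_eq_zero_of_natDegree_lt (lt_of_lt_of_le (natDegree_comb_lt G H hG hH v) hm)]
    rw [if_neg (by omega)]

lemma coeff_polyA (G H : R[X]) (v : Fin (H.natDegree + G.natDegree) → R)
    (j : Fin H.natDegree) : (polyA G H v).coeff (j : ℕ) = v (Fin.castAdd G.natDegree j) := by
  rw [polyA, finset_sum_coeff]
  rw [Finset.sum_eq_single j]
  · simp
  · intro j' _ hj'
    rw [coeff_C_mul, coeff_X_pow, if_neg (by simpa [Fin.val_eq_val] using (Ne.symm hj')), mul_zero]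
  · simp

lemma coeff_polyB (G H : R[X]) (v : Fin (H.natDegree + G.natDegree) → R)
    (j : Fin G.natDegree) : (polyB G H v).coeff (j : ℕ) = v (Fin.natAdd H.natDegree j) := by
  rw [polyB, finset_sum_coeff]
  rw [Finset.sum_eq_single j]
  · simp
  · intro j' _ hj'
    rw [coeff_C_mul, coeff_X_pow, if_neg (by simpa [Fin.val_eq_val] using (Ne.symm hj')), mul_zero]
  · simp

lemma det_ne_zero [IsDomain R] [UniqueFactorizationMonoid R]
    (G H : R[X]) (hG : 1 ≤ G.natDegree) (hH : 1 ≤ H.natDegree)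
    (hrel : IsRelPrime G H) : (syl G H).det ≠ 0 := by
  intro h0
  obtain ⟨v, hv, hveq⟩ := (Matrix.exists_mulVec_eq_zero_iff).mpr h0
  set A := polyA G H v with hA
  set B := polyB G H v with hB
  have hP : A * G + B * H = 0 := by
    ext m
    rw [coeff_zero]
    by_cases hm : m < H.natDegree + G.natDegree
    · have h := coeff_key G H v ⟨m, hm⟩
      rw [show ((⟨m, hm⟩ : Fin _) : ℕ) = m from rfl] at h
      rw [← hA, ← hB] at h
      rw [h, hveq, Pi.zero_apply]
    · push_neg at hm
      exact coeff_eq_zero_of_natDegree_lt (lt_of_lt_of_le (natDegree_comb_lt G H hG hH v) hm)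
  have hAne : A ≠ 0 := by
    intro hA0
    have hB0 : B = 0 := by
      have : B * H = 0 := by rw [hA0, zero_mul, zero_add] at hP; exact hP
      rcases mul_eq_zero.mp this with h | h
      · exact h
      · rw [h, natDegree_zero] at hH; omega
    apply hv
    funext j
    refine Fin.addCases (fun j1 => ?_) (fun j2 => ?_) j
    · rw [← coeff_polyA G H v j1, ← hA, hA0, coeff_zero, Pi.zero_apply]
    · rw [← coeff_polyB G H v j2, ← hB, hB0, coeff_zero, Pi.zero_apply]
  have hdvd : H ∣ A * G := ⟨-B, by linear_combination hP⟩
  have := Polynomial.natDegree_le_of_dvd (hrel.symm.dvd_of_dvd_mul_right hdvd) hAne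
  have hlt := natDegree_polyAux_lt hH (fun j : Fin H.natDegree => v (Fin.castAdd G.natDegree j))
  rw [← polyA, ← hA] at hlt
  omega



variable {n : ℕ} {F : Type*} [Field F]

lemma totalDegree_det_le {N : ℕ} (M : Matrix (Fin N) (Fin N) (MvPolynomial (Fin n) F))
    (d : ℕ) (hM : ∀ i j, (M i j).totalDegree ≤ d) : (M.det).totalDegree ≤ N * d := by
  rw [Matrix.det_apply]
  refine (MvPolynomial.totalDegree_finset_sum _ _).trans ?_
  refine Finset.sup_le fun σ _ => ?_
  have hprod : (∏ i, M (σ i) i).totalDegree ≤ N * d := by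
    refine (MvPolynomial.totalDegree_finset_prod _ _).trans ?_
    calc ∑ i : Fin N, (M (σ i) i).totalDegree ≤ ∑ _i : Fin N, d :=
          Finset.sum_le_sum fun i _ => hM _ _
      _ = N * d := by simp [Finset.sum_const, mul_comm]
  rcases Int.units_eq_one_or (Equiv.Perm.sign σ) with h | h <;>
    simp [h, Units.smul_def, MvPolynomial.totalDegree_neg, hprod]

lemma le_totalDegree_of_mem_pow {p : MvPolynomial (Fin n) F} {k : ℕ}
    (h : p ∈ (Ideal.span (Set.range (MvPolynomial.X : Fin n → MvPolynomial (Fin n) F))) ^ k)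
    (hp : p ≠ 0) : k ≤ p.totalDegree := by
  have key : ∀ k : ℕ,
      (Ideal.span (Set.range (MvPolynomial.X : Fin n → MvPolynomial (Fin n) F))) ^ k ≤
      Ideal.span ((fun s => MvPolynomial.monomial s (1 : F)) ''
        {s : Fin n →₀ ℕ | k ≤ s.sum fun _ e => e}) := by
    intro k
    induction k with
    | zero =>
      rw [pow_zero, Ideal.one_eq_top, top_le_iff, Ideal.eq_top_iff_one]
      refine Ideal.subset_span ⟨0, by simp, ?_⟩
      simp [MvPolynomial.monomial_zero']
    | succ k ih =>
      rw [pow_succ]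
      refine le_trans (Ideal.mul_mono ih le_rfl) ?_
      rw [Ideal.span_mul_span]
      rw [Ideal.span_le]
      rintro x hx
      simp only [Set.mem_mul, Set.mem_iUnion, Set.mem_image, Set.mem_range, Set.mem_singleton_iff,
        Set.mem_setOf_eq, exists_prop] at hx
      obtain ⟨y, ⟨s, hs, rfl⟩, z, ⟨i, rfl⟩, rfl⟩ := hx
      refine Ideal.subset_span ⟨s + Finsupp.single i 1, ?_, ?_⟩
      · have : (s + Finsupp.single i 1).sum (fun _ e => e)
            = s.sum (fun _ e => e) + 1 := by
          rw [Finsupp.sum_add_index' (fun _ => rfl) (fun _ _ _ => rfl)]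
          simp [Finsupp.sum_single_index]
        simp only [Set.mem_setOf_eq, this]
        exact Nat.add_le_add (by exact hs) le_rfl
      · rw [MvPolynomial.X, MvPolynomial.monomial_mul, mul_one]
  have h' := key k h
  rw [MvPolynomial.mem_ideal_span_monomial_image] at h'
  obtain ⟨m, hm⟩ := (MvPolynomial.support_nonempty.mpr hp)
  obtain ⟨s, hs, hsm⟩ := h' m hm
  have h1 : s.sum (fun _ e => e) ≤ m.sum (fun _ e => e) := by
    rw [Finsupp.sum_of_support_subset s (Finsupp.support_mono hsm) _ (fun _ _ => rfl)]
    exact Finset.sum_le_sum fun a _ => hsm a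
  exact le_trans (le_trans hs h1) (MvPolynomial.le_totalDegree hm)


end Stmt10Aux


/-- if `G, H` are monic in `y` with `1 ≤ deg_y ≤ d_y` and
`x`-degree at most `d`, and there are `φ` and `k > 2·d_y·d` with both
`G(x,φ(x))` and `H(x,φ(x))` in `⟨x₁,…,xₙ⟩^k`, then `G` and `H` have a common
non-unit factor. -/
theorem stmt10 {n : ℕ} {F : Type*} [Field F]
    (G H : Polynomial (MvPolynomial (Fin n) F)) (d_y d : ℕ)
    (hGmonic : G.Monic) (hGdeg1 : 1 ≤ G.natDegree) (hGdeg2 : G.natDegree ≤ d_y)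
    (hGcoeff : ∀ i, (G.coeff i).totalDegree ≤ d)
    (hHmonic : H.Monic) (hHdeg1 : 1 ≤ H.natDegree) (hHdeg2 : H.natDegree ≤ d_y)
    (hHcoeff : ∀ i, (H.coeff i).totalDegree ≤ d)
    (hex : ∃ (φ : MvPolynomial (Fin n) F) (k : ℕ), 2 * d_y * d < k ∧
      Polynomial.eval φ G ∈
        (Ideal.span (Set.range (MvPolynomial.X : Fin n → MvPolynomial (Fin n) F))) ^ k ∧
      Polynomial.eval φ H ∈
        (Ideal.span (Set.range (MvPolynomial.X : Fin n → MvPolynomial (Fin n) F))) ^ k) :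
    ∃ p : Polynomial (MvPolynomial (Fin n) F), ¬ IsUnit p ∧ p ∣ G ∧ p ∣ H := by
  by_contra hcon
  have hrel : IsRelPrime G H := fun p hpG hpH => by
    by_contra hu
    exact hcon ⟨p, hu, hpG, hpH⟩
  obtain ⟨φ, k, hk, hGφ, hHφ⟩ := hex
  obtain ⟨A, B, hAB⟩ := Stmt10Aux.exists_bezout G H hGdeg1 hHdeg1
  have hdet0 : (Stmt10Aux.syl G H).det ≠ 0 :=
    Stmt10Aux.det_ne_zero G H hGdeg1 hHdeg1 hrel
  have hdeg : ((Stmt10Aux.syl G H).det).totalDegree ≤ (H.natDegree + G.natDegree) * d := by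
    refine Stmt10Aux.totalDegree_det_le _ d fun i j => ?_
    refine Fin.addCases (fun j1 => ?_) (fun j2 => ?_) j <;>
      simp only [Stmt10Aux.syl, Fin.addCases_left, Fin.addCases_right] <;>
      split_ifs <;>
      first
        | exact hGcoeff _
        | exact hHcoeff _
        | simp
  have hmem : (Stmt10Aux.syl G H).det ∈
      (Ideal.span (Set.range (MvPolynomial.X : Fin n → MvPolynomial (Fin n) F))) ^ k := by
    have h1 : Polynomial.eval φ (A * G + B * H) ∈
        (Ideal.span (Set.range (MvPolynomial.X : Fin n → MvPolynomial (Fin n) F))) ^ k := by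
      rw [Polynomial.eval_add, Polynomial.eval_mul, Polynomial.eval_mul]
      exact Ideal.add_mem _ (Ideal.mul_mem_left _ _ hGφ) (Ideal.mul_mem_left _ _ hHφ)
    rwa [hAB, Polynomial.eval_C] at h1
  have hk2 : k ≤ ((Stmt10Aux.syl G H).det).totalDegree :=
    Stmt10Aux.le_totalDegree_of_mem_pow hmem hdet0
  have hle : (H.natDegree + G.natDegree) * d ≤ 2 * d_y * d :=
    Nat.mul_le_mul_right d (by omega)
  omega
end

section
/- Let M be an r × c matrix with entries in the polynomial ring ℂ[x₁,…,xₙ] such that r ≥ c and the rank of M over the fraction field ℂ(x₁,…,xₙ) equals c. Let M† be the c × r matrix obtained by transposing M and applying complex conjugation to every coefficient of every entry. Then the c × c matrix M†·M has rank c over ℂ(x₁,…,xₙ); equivalently, det(M†·M) is a nonzero polynomial. -/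
open Matrix Polynomial

/-- A ring endomorphism `τ` is "good" if `∑ τ(vᵢ)·vᵢ = 0` forces all `vᵢ = 0`. -/
def Good {S : Type*} [CommRing S] (τ : S →+* S) : Prop :=
  ∀ (m : ℕ) (v : Fin m → S), (∑ i, τ (v i) * v i) = 0 → ∀ i, v i = 0

lemma good_conj : Good (starRingEnd ℂ) := by
  intro m v hv i
  have h : ∀ j ∈ Finset.univ, (0:ℝ) ≤ Complex.normSq (v j) := fun j _ => Complex.normSq_nonneg _
  have hsum : ∑ j, Complex.normSq (v j) = 0 := by
    have := congrArg Complex.re hv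
    simpa [Complex.normSq_apply, Complex.mul_re, Complex.conj_re, Complex.conj_im,
      mul_comm] using this
  have := (Finset.sum_eq_zero_iff_of_nonneg h).mp hsum i (Finset.mem_univ i)
  exact Complex.normSq_eq_zero.mp this

lemma Good.transfer {S T : Type*} [CommRing S] [CommRing T] (σ : S ≃+* T)
    {τS : S →+* S} {τT : T →+* T} (hcomm : ∀ s, σ (τS s) = τT (σ s))
    (h : Good τS) : Good τT := by
  intro m v hv i
  have h2 : ∀ t : T, σ.symm (τT t) = τS (σ.symm t) := by
    intro t
    have := hcomm (σ.symm t)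
    rw [σ.apply_symm_apply] at this
    rw [← this, σ.symm_apply_apply]
  have hv' : (∑ j, τS (σ.symm (v j)) * σ.symm (v j)) = 0 := by
    have := congrArg σ.symm hv
    simpa [map_sum, _root_.map_mul, h2] using this
  have := h m (fun j => σ.symm (v j)) hv' i
  have := congrArg σ this
  simpa using this

lemma Good.polynomial {S : Type*} [CommRing S] {τ : S →+* S} (h : Good τ) :
    Good (Polynomial.mapRingHom τ) := by
  intro m
  suffices H : ∀ (d : ℕ) (v : Fin m → Polynomial S), (∀ i, (v i).natDegree ≤ d) →
      (∑ i, Polynomial.mapRingHom τ (v i) * v i) = 0 → ∀ i, v i = 0 by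
    intro v hv i
    exact H (Finset.univ.sup fun i => (v i).natDegree) v
      (fun i => Finset.le_sup (f := fun i => (v i).natDegree) (Finset.mem_univ i)) hv i
  intro d
  induction d with
  | zero =>
    intro v hdeg hv i
    have hC : ∀ i, v i = C ((v i).coeff 0) := fun i =>
      (Polynomial.eq_C_of_natDegree_le_zero (hdeg i))
    have hsum : (∑ i, τ ((v i).coeff 0) * (v i).coeff 0) = 0 := by
      have h2 := congrArg (fun p => Polynomial.coeff p 0) hv
      simp only [finset_sum_coeff, Polynomial.coe_mapRingHom, Polynomial.mul_coeff_zero,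
        Polynomial.coeff_map, Polynomial.coeff_zero] at h2
      exact h2
    rw [hC i, h m _ hsum i, map_zero]
  | succ d ih =>
    intro v hdeg hv i
    set D := d + 1 with hD
    have key : ∀ i, (v i).coeff D = 0 := by
      have hco : ∀ i, (Polynomial.map τ (v i) * v i).coeff (D + D)
          = τ ((v i).coeff D) * (v i).coeff D := by
        intro i
        rw [Polynomial.coeff_mul]
        refine (Finset.sum_eq_single (D, D) ?_ ?_).trans (by simp [Polynomial.coeff_map])
        · rintro ⟨a, b⟩ hab hne
          rw [Finset.HasAntidiagonal.mem_antidiagonal] at hab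
          rcases lt_or_ge D a with hlt | hle
          · have : (v i).coeff a = 0 :=
              Polynomial.coeff_eq_zero_of_natDegree_lt (lt_of_le_of_lt (hdeg i) hlt)
            simp [Polynomial.coeff_map, this]
          · have hb : D < b := by
              rcases lt_or_eq_of_le hle with h' | h'
              · omega
              · exfalso; apply hne; simp at hab ⊢; omega
            have : (v i).coeff b = 0 :=
              Polynomial.coeff_eq_zero_of_natDegree_lt (lt_of_le_of_lt (hdeg i) hb)
            simp [this]
        · intro hni
          exfalso; apply hni; rw [Finset.HasAntidiagonal.mem_antidiagonal]
      have hsum : (∑ i, τ ((v i).coeff D) * (v i).coeff D) = 0 := by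
        have h2 := congrArg (fun p => Polynomial.coeff p (D + D)) hv
        simp only [finset_sum_coeff, Polynomial.coe_mapRingHom, Polynomial.coeff_zero] at h2
        simp only [hco] at h2
        exact h2
      exact fun i => h m _ hsum i
    have hdeg' : ∀ i, (v i).natDegree ≤ d := by
      intro i
      rw [Polynomial.natDegree_le_iff_coeff_eq_zero]
      intro k hk
      rcases eq_or_lt_of_le (Nat.succ_le_of_lt hk) with h' | h'
      · rw [← h']; exact key i
      · exact Polynomial.coeff_eq_zero_of_natDegree_lt (lt_of_le_of_lt (hdeg i) h')
    exact ih v hdeg' hv i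

lemma finSuccEquiv_map_conj (n : ℕ) (p : MvPolynomial (Fin (n + 1)) ℂ) :
    MvPolynomial.finSuccEquiv ℂ n (MvPolynomial.map (starRingEnd ℂ) p)
      = Polynomial.map (MvPolynomial.map (starRingEnd ℂ))
          (MvPolynomial.finSuccEquiv ℂ n p) := by
  have key : ((MvPolynomial.finSuccEquiv ℂ n).toAlgHom.toRingHom).comp
        (MvPolynomial.map (starRingEnd ℂ))
      = (Polynomial.mapRingHom (MvPolynomial.map (starRingEnd ℂ))).comp
        ((MvPolynomial.finSuccEquiv ℂ n).toAlgHom.toRingHom) := by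
    apply MvPolynomial.ringHom_ext
    · intro a
      simp [MvPolynomial.finSuccEquiv_apply]
    · intro j
      refine Fin.cases ?_ ?_ j
      · simp [MvPolynomial.finSuccEquiv_X_zero]
      · intro j
        simp [MvPolynomial.finSuccEquiv_X_succ]
  exact RingHom.congr_fun key p

lemma good_mv (n : ℕ) :
    Good (MvPolynomial.map (starRingEnd ℂ) :
      MvPolynomial (Fin n) ℂ →+* MvPolynomial (Fin n) ℂ) := by
  induction n with
  | zero =>
    refine Good.transfer (MvPolynomial.isEmptyRingEquiv ℂ (Fin 0)).symm ?_ good_conj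
    intro s
    have hsymm : ∀ a : ℂ, (MvPolynomial.isEmptyRingEquiv ℂ (Fin 0)).symm a
        = MvPolynomial.C a := by
      intro a
      apply (MvPolynomial.isEmptyRingEquiv ℂ (Fin 0)).injective
      rw [RingEquiv.apply_symm_apply]
      simp [MvPolynomial.isEmptyRingEquiv, MvPolynomial.isEmptyAlgEquiv]
      exact (MvPolynomial.coeff_zero_C a).symm
    rw [hsymm, hsymm, MvPolynomial.map_C]
  | succ n ih =>
    refine Good.transfer (MvPolynomial.finSuccEquiv ℂ n).toRingEquiv.symm ?_ ih.polynomial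
    intro P
    apply (MvPolynomial.finSuccEquiv ℂ n).injective
    rw [finSuccEquiv_map_conj]
    have hcancel : ∀ x, (MvPolynomial.finSuccEquiv ℂ n)
        ((MvPolynomial.finSuccEquiv ℂ n).toRingEquiv.symm x) = x := fun x =>
      (MvPolynomial.finSuccEquiv ℂ n).toRingEquiv.apply_symm_apply x
    rw [hcancel, hcancel]
    rfl


set_option synthInstance.maxHeartbeats 1000000
set_option maxHeartbeats 2000000
set_option linter.unusedVariables false

/-- if `M` is an `r × c` matrix over `ℂ[x₁,…,xₙ]` with `r ≥ c`
and rank `c` over the fraction field `ℂ(x₁,…,xₙ)`, then `M† · M` has rank `c`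
over `ℂ(x₁,…,xₙ)`; equivalently, `det(M† · M)` is a nonzero polynomial.
Here `M†` is the conjugate transpose, conjugating each coefficient of each
entry. -/
theorem stmt11 {n r c : ℕ} (M : Matrix (Fin r) (Fin c) (MvPolynomial (Fin n) ℂ))
    (hrc : c ≤ r)
    (hrank : (M.map (algebraMap (MvPolynomial (Fin n) ℂ)
        (FractionRing (MvPolynomial (Fin n) ℂ)))).rank = c) :
    (((M.map (MvPolynomial.map (starRingEnd ℂ))).transpose * M).map
        (algebraMap (MvPolynomial (Fin n) ℂ)
          (FractionRing (MvPolynomial (Fin n) ℂ)))).rank = c ∧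
    ((M.map (MvPolynomial.map (starRingEnd ℂ))).transpose * M).det ≠ 0 := by
  classical
  set φ := algebraMap (MvPolynomial (Fin n) ℂ)
      (FractionRing (MvPolynomial (Fin n) ℂ)) with hφdef
  have hφ : Function.Injective φ := IsFractionRing.injective _ _
  set st := (MvPolynomial.map (starRingEnd ℂ) :
      MvPolynomial (Fin n) ℂ →+* MvPolynomial (Fin n) ℂ) with hstdef
  set A := (M.map ⇑st)ᵀ * M with hA
  have hdet : A.det ≠ 0 := by
    intro h0
    obtain ⟨v, hv0, hAv⟩ := Matrix.exists_mulVec_eq_zero_iff.mpr h0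
    set u := M *ᵥ v with hu
    have hstu : (fun i => st (u i)) = (M.map ⇑st) *ᵥ (fun j => st (v j)) := by
      funext i
      exact RingHom.map_mulVec st M v i
    have hzero : ∑ i, st (u i) * u i = 0 := by
      have e1 : ∑ i, st (u i) * u i = (fun i => st (u i)) ⬝ᵥ u := rfl
      rw [e1, hstu, ← Matrix.vecMul_transpose, ← Matrix.dotProduct_mulVec, hu,
        Matrix.mulVec_mulVec, ← hA, hAv]
      simp [dotProduct]
    have hMv : M *ᵥ v = 0 := by
      funext i; exact good_mv n r u hzero i
    have hNv : (M.map ⇑φ) *ᵥ (⇑φ ∘ v) = 0 := by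
      funext i
      rw [← RingHom.map_mulVec, hMv]
      simp
    have hker : (M.map ⇑φ).mulVecLin (⇑φ ∘ v) = 0 := by
      rw [Matrix.mulVecLin_apply]; exact hNv
    have hvK : (⇑φ ∘ v) ≠ 0 := by
      intro h
      apply hv0
      funext j
      have := congrFun h j
      simp only [Function.comp_apply, Pi.zero_apply] at this
      exact hφ (by simpa using this)
    have hle := LinearMap.finrank_range_add_finrank_ker (M.map ⇑φ).mulVecLin
    rw [Module.finrank_fin_fun] at hle
    have hpos : 0 < Module.finrank (FractionRing (MvPolynomial (Fin n) ℂ))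
        (LinearMap.ker (M.map ⇑φ).mulVecLin) := by
      rw [Module.finrank_pos_iff]
      exact nontrivial_of_ne ⟨⇑φ ∘ v, LinearMap.mem_ker.mpr hker⟩ 0
        (by simpa [Submodule.mk_eq_zero] using hvK)
    have hrk : (M.map ⇑φ).rank = c := hrank
    unfold Matrix.rank at hrk
    omega
  refine ⟨?_, hdet⟩
  have hdetK : (A.map ⇑φ).det ≠ 0 := by
    rw [show A.map ⇑φ = φ.mapMatrix A from rfl, ← RingHom.map_det]
    exact fun h => hdet (hφ (by simpa using h))
  have hU : IsUnit (A.map ⇑φ) :=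
    (Matrix.isUnit_iff_isUnit_det _).mpr (isUnit_iff_ne_zero.mpr hdetK)
  have := Matrix.rank_of_isUnit _ hU
  simpa using this
end
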